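/- There exists a universal constant C > 0 such that the following holds. Let X be a finite, connected, undirected graph with at least two vertices such that |B(x,R)| = |B(y,R)| for all vertices x, y ∈ V and all R ≥ 0 (for instance, X vertex-transitive). Then for every vertex x ∈ V and every ε ∈ (0,1), |B(x, ε·diam(X))| ≤ C·(1 + ε·|V|). -/

import Mathlib

open Finset

/-- The closed ball of radius `R` (a real number) about `x` in the shortest-path metric
of the graph `G`. -/
noncomputable def gball {V : Type} [Fintype V] (G : SimpleGraph V) (x : V) (R : ℝ) : Finset V :=
  @Finset.filter _ (fun y => (G.dist x y : ℝ) ≤ R) (Classical.decPred _) Finset.univ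

/-- The diameter of the graph `G` in the shortest-path metric. -/
noncomputable def gdiam {V : Type} [Fintype V] (G : SimpleGraph V) : ℕ :=
  Finset.univ.sup fun p : V × V => G.dist p.1 p.2

lemma mem_gball {V : Type} [Fintype V] {G : SimpleGraph V} {x y : V} {R : ℝ} :
    y ∈ gball G x R ↔ (G.dist x y : ℝ) ≤ R := by
  simp [gball]

lemma exists_vertex_at_dist {V : Type} {G : SimpleGraph V} (hc : G.Connected) (u v : V) :
    ∀ n, n ≤ G.dist u v → ∃ w, G.dist u w = n ∧ G.dist w v = G.dist u v - n := by
  intro n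
  induction n with
  | zero => intro _; exact ⟨u, SimpleGraph.dist_self, by simp⟩
  | succ n ih =>
    intro hn
    obtain ⟨w, hw1, hw2⟩ := ih (Nat.le_of_succ_le hn)
    have hdwv : 1 ≤ G.dist w v := by omega
    obtain ⟨p, hp⟩ := (hc w v).exists_walk_length_eq_dist
    have hpnil : ¬ p.Nil := by rw [SimpleGraph.Walk.nil_iff_length_eq]; omega
    obtain ⟨u', hadj, q, rfl⟩ := SimpleGraph.Walk.not_nil_iff.mp hpnil
    have hq : q.length = G.dist w v - 1 := by
      simp only [SimpleGraph.Walk.length_cons] at hp; omega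
    have hdu'v : G.dist u' v ≤ G.dist w v - 1 := hq ▸ SimpleGraph.dist_le q
    have hwu' : G.dist w u' = 1 := SimpleGraph.dist_eq_one_iff_adj.mpr hadj
    have h1 : G.dist u u' ≤ n + 1 := by
      have := hc.dist_triangle (u := u) (v := w) (w := u')
      omega
    have h2 : G.dist u v ≤ G.dist u u' + G.dist u' v := hc.dist_triangle
    refine ⟨u', by omega, by omega⟩

/-- there is a universal constant `C > 0` such that in every finite connected
graph with at least two vertices in which all balls of equal radii have equal cardinality
(e.g. a vertex-transitive graph), for every vertex `x` and `ε ∈ (0,1)`,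
`|B(x, ε·diam(X))| ≤ C·(1 + ε·|V|)`. -/
theorem small_ball_cardinality_bound_symmetric :
    ∃ C : ℝ, 0 < C ∧
      ∀ (V : Type) [Fintype V] (G : SimpleGraph V),
        G.Connected →
        2 ≤ Fintype.card V →
        -- balls of equal radii have equal cardinality
        (∀ (x y : V) (R : ℝ), 0 ≤ R → (gball G x R).card = (gball G y R).card) →
        ∀ (x : V) (ε : ℝ), 0 < ε → ε < 1 →
          ((gball G x (ε * (gdiam G : ℝ))).card : ℝ)
            ≤ C * (1 + ε * (Fintype.card V : ℝ)) := by
  refine ⟨3, by norm_num, ?_⟩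
  intro V _ G hconn hcard heq x ε hε hε1
  haveI : Nonempty V := ⟨x⟩
  classical
  set D : ℕ := gdiam G with hD
  have hεD : (0:ℝ) ≤ ε * D := by positivity
  have hεV : (0:ℝ) ≤ ε * Fintype.card V := by positivity
  by_cases hsmall : ε * (D:ℝ) < 1
  · -- ball is just {x}
    have hsub : gball G x (ε * D) ⊆ {x} := by
      intro y hy
      rw [mem_gball] at hy
      have : G.dist x y = 0 := by
        by_contra h
        have : (1:ℝ) ≤ (G.dist x y : ℝ) := by exact_mod_cast Nat.one_le_iff_ne_zero.mpr h
        linarith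
      have := (hconn.dist_eq_zero_iff).mp this
      simp [this.symm]
    have : ((gball G x (ε * D)).card : ℝ) ≤ 1 := by
      exact_mod_cast Finset.card_le_card hsub
    linarith
  · push_neg at hsmall
    set R : ℕ := ⌊ε * (D:ℝ)⌋₊ with hR
    have hR1 : 1 ≤ R := Nat.le_floor (by exact_mod_cast hsmall)
    have hRle : (R:ℝ) ≤ ε * D := Nat.floor_le hεD
    -- the real-radius ball equals the nat-radius ball
    have hball_eq : gball G x (ε * D) = gball G x (R:ℝ) := by
      ext y
      rw [mem_gball, mem_gball, Nat.cast_le (α := ℝ), ← Nat.le_floor_iff hεD]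
    -- get a pair realizing the diameter
    obtain ⟨⟨u, v⟩, -, huv⟩ := Finset.exists_mem_eq_sup Finset.univ
      (univ_nonempty_iff.mpr inferInstance) (fun p : V × V => G.dist p.1 p.2)
    have hDuv : D = G.dist u v := huv
    set a : ℕ := 2 * R + 1 with ha
    set k : ℕ := D / a with hk
    -- centers
    have hcenter : ∀ m, m ≤ k → ∃ w, G.dist u w = m * a := by
      intro m hm
      have hma : m * a ≤ G.dist u v := by
        calc m * a ≤ k * a := Nat.mul_le_mul_right a hm
        _ = (D / a) * a := rfl
        _ ≤ D := Nat.div_mul_le_self D a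
        _ = G.dist u v := hDuv
      obtain ⟨w, hw, -⟩ := exists_vertex_at_dist hconn u v (m * a) hma
      exact ⟨w, hw⟩
    choose! c hc using hcenter
    -- balls around centers are pairwise disjoint
    have hdisj : ∀ m ∈ Finset.range (k+1), ∀ m' ∈ Finset.range (k+1), m ≠ m' →
        Disjoint (gball G (c m) (R:ℝ)) (gball G (c m') (R:ℝ)) := by
      intro m hm m' hm' hne
      rw [Finset.mem_range] at hm hm'
      rw [Finset.disjoint_left]
      intro y hy hy'
      rw [mem_gball, Nat.cast_le (α := ℝ)] at hy hy'
      have h1 : G.dist u (c m') ≤ G.dist u (c m) + G.dist (c m) (c m') := hconn.dist_triangle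
      have h2 : G.dist u (c m) ≤ G.dist u (c m') + G.dist (c m') (c m) := hconn.dist_triangle
      have h3 : G.dist (c m) (c m') ≤ 2 * R := by
        have := hconn.dist_triangle (u := c m) (v := y) (w := c m')
        have hsym : G.dist y (c m') = G.dist (c m') y := SimpleGraph.dist_comm
        omega
      have h4 : G.dist (c m') (c m) ≤ 2 * R := SimpleGraph.dist_comm (u := c m') ▸ h3
      rw [hc m (by omega), hc m' (by omega)] at h1 h2
      have hlt1 : m' * a < (m + 1) * a := by
        have : (m+1) * a = m * a + a := by ring
        omega
      have hlt2 : m * a < (m' + 1) * a := by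
        have : (m'+1) * a = m' * a + a := by ring
        omega
      have := Nat.lt_of_mul_lt_mul_right hlt1
      have := Nat.lt_of_mul_lt_mul_right hlt2
      omega
    -- counting
    set B : ℕ := (gball G x (R:ℝ)).card with hB
    have hcount : (k + 1) * B ≤ Fintype.card V := by
      have hunion := Finset.card_biUnion hdisj
      have hle : ((Finset.range (k+1)).biUnion (fun m => gball G (c m) (R:ℝ))).card
          ≤ Fintype.card V := by
        rw [← Finset.card_univ]
        exact Finset.card_le_card (Finset.subset_univ _)
      rw [hunion] at hle
      have : ∑ m ∈ Finset.range (k+1), (gball G (c m) (R:ℝ)).card = (k+1) * B := by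
        rw [Finset.sum_congr rfl (fun m _ => heq (c m) x (R:ℝ) (by positivity))]
        simp [mul_comm, hB]
      omega
    have hDk : D + 1 ≤ (k + 1) * a := by
      have hmod : a * k + D % a = D := Nat.div_add_mod D a
      have hlt : D % a < a := Nat.mod_lt D (by omega)
      have hka : (k+1) * a = a * k + a := by ring
      omega
    have hBD : B * (D + 1) ≤ Fintype.card V * a := by
      calc B * (D + 1) ≤ B * ((k+1) * a) := Nat.mul_le_mul_left B hDk
        _ = ((k+1) * B) * a := by ring
        _ ≤ Fintype.card V * a := Nat.mul_le_mul_right a hcount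
    -- pass to reals
    have hBDr : (B:ℝ) * ((D:ℝ) + 1) ≤ (Fintype.card V : ℝ) * (2 * (R:ℝ) + 1) := by
      rw [ha] at hBD
      exact_mod_cast hBD
    have hRr : (1:ℝ) ≤ (R:ℝ) := by exact_mod_cast hR1
    have hVr : (0:ℝ) ≤ (Fintype.card V : ℝ) := by positivity
    have hDr : (0:ℝ) < (D:ℝ) + 1 := by positivity
    have hfinal : (B:ℝ) ≤ 3 * ε * (Fintype.card V : ℝ) := by
      have h5 : (Fintype.card V : ℝ) * (2 * R + 1) ≤ (Fintype.card V : ℝ) * (3 * (ε * D)) := by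
        have : (2:ℝ) * R + 1 ≤ 3 * R := by linarith
        nlinarith
      have h6 : (Fintype.card V : ℝ) * (3 * (ε * D)) ≤ 3 * ε * (Fintype.card V : ℝ) * ((D:ℝ) + 1) := by
        nlinarith
      have h7 := le_trans hBDr (le_trans h5 h6)
      exact le_of_mul_le_mul_right h7 hDr
    rw [hball_eq]
    calc (B:ℝ) ≤ 3 * ε * (Fintype.card V : ℝ) := hfinal
      _ ≤ 3 * (1 + ε * Fintype.card V) := by linarith
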